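/- For every 1 ≤ p < ∞ the natural map identifies L_p(μ) isometrically isomorphically with L_p(μ_loc): every f ∈ L_p(μ) belongs to L_p(μ_loc), and every f ∈ L_p(μ_loc) agrees μ_loc-a.e. with a function of the form 1_{A'}·f with A' ∈ 𝒜 σ-finite, which belongs to L_p(μ). -/

import Mathlib

open MeasureTheory Set ENNReal

/-- A set `B` is locally measurable if `B ∩ A` is measurable for every measurable set `A`
of finite measure. -/
def LocallyMeasurable {Ω : Type*} [MeasurableSpace Ω] (μ : Measure Ω) (B : Set Ω) : Prop :=
  ∀ A : Set Ω, MeasurableSet A → μ A < ∞ → MeasurableSet (B ∩ A)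

/-- The σ-algebra `𝒜_loc` of locally measurable sets. -/
def locSpace {Ω : Type*} [MeasurableSpace Ω] (μ : Measure Ω) : MeasurableSpace Ω where
  MeasurableSet' := LocallyMeasurable μ
  measurableSet_empty := fun A hA _ => by
    rw [Set.empty_inter]; exact MeasurableSet.empty
  measurableSet_compl := fun B hB A hA hAfin => by
    have h : Bᶜ ∩ A = A \ (B ∩ A) := by ext x; by_cases hx : x ∈ B <;> simp [hx]
    rw [h]; exact hA.diff (hB A hA hAfin)
  measurableSet_iUnion := fun s hs A hA hAfin => by
    rw [Set.iUnion_inter]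
    exact MeasurableSet.iUnion fun n => hs n A hA hAfin

/-- `μ_loc B = sup { μ (B ∩ A) : A measurable, μ A < ∞ }`. -/
noncomputable def muLoc {Ω : Type*} [MeasurableSpace Ω] (μ : Measure Ω) (B : Set Ω) : ℝ≥0∞ :=
  ⨆ (A : Set Ω) (_ : MeasurableSet A ∧ μ A < ∞), μ (B ∩ A)

section Aux
variable {Ω : Type*} [mΩ : MeasurableSpace Ω] {μ : Measure Ω}

lemma locMeasurable_of_measurable {A : Set Ω} (hA : MeasurableSet A) :
    LocallyMeasurable μ A := fun C hC _ => hA.inter hC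

lemma le_locSpace : mΩ ≤ locSpace μ := fun _s hs => locMeasurable_of_measurable hs

lemma muLoc_le_measure (B : Set Ω) : muLoc μ B ≤ μ B :=
  iSup₂_le fun _A _ => measure_mono inter_subset_left

lemma measure_inter_le_muLoc {A : Set Ω} (B : Set Ω) (hA : MeasurableSet A) (hAfin : μ A < ∞) :
    μ (B ∩ A) ≤ muLoc μ B :=
  le_iSup₂ (f := fun A (_ : MeasurableSet A ∧ μ A < ∞) => μ (B ∩ A)) A ⟨hA, hAfin⟩

lemma measurableSet_of_subset_sigmaFin {B : Set Ω} (hB : LocallyMeasurable μ B)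
    {s : ℕ → Set Ω} (hs : ∀ n, MeasurableSet (s n) ∧ μ (s n) < ∞) (hsub : B ⊆ ⋃ n, s n) :
    MeasurableSet B := by
  have h : B = ⋃ n, B ∩ s n := by rw [← inter_iUnion]; exact (inter_eq_left.mpr hsub).symm
  rw [h]
  exact MeasurableSet.iUnion fun n => hB (s n) (hs n).1 (hs n).2

lemma muLoc_eq_of_subset_sigmaFin {B : Set Ω} (hB : LocallyMeasurable μ B)
    {s : ℕ → Set Ω} (hs : ∀ n, MeasurableSet (s n) ∧ μ (s n) < ∞) (hsub : B ⊆ ⋃ n, s n) :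
    muLoc μ B = μ B := by
  refine le_antisymm (muLoc_le_measure B) ?_
  set t : ℕ → Set Ω := fun n => Set.accumulate s n with ht
  have htm : ∀ n, MeasurableSet (t n) := fun n =>
    MeasurableSet.biUnion (to_countable _) fun k _ => (hs k).1
  have hstep : ∀ n, Set.accumulate s (n + 1) = Set.accumulate s n ∪ s (n + 1) := by
    intro n
    ext x
    simp only [Set.mem_accumulate, mem_union]
    constructor
    · rintro ⟨y, hy, hx⟩
      rcases eq_or_lt_of_le hy with rfl | h
      · exact Or.inr hx
      · exact Or.inl ⟨y, by omega, hx⟩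
    · rintro (⟨y, hy, hx⟩ | hx)
      · exact ⟨y, by omega, hx⟩
      · exact ⟨n + 1, le_rfl, hx⟩
  have hzero : Set.accumulate s 0 = s 0 := by
    ext x; simp [Set.mem_accumulate, Nat.le_zero]
  have htfin : ∀ n, μ (t n) < ∞ := by
    intro n
    induction n with
    | zero => simpa only [ht, hzero] using (hs 0).2
    | succ n ih =>
      simp only [ht] at ih ⊢
      rw [hstep]
      exact (measure_union_le _ _).trans_lt (ENNReal.add_lt_top.mpr ⟨ih, (hs (n+1)).2⟩)
  have hdir : Directed (· ⊆ ·) fun n => B ∩ t n := by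
    have hmono : Monotone fun n => B ∩ t n := fun a b hab =>
      inter_subset_inter_right _ (Set.monotone_accumulate hab)
    exact hmono.directed_le
  have hcov : B = ⋃ n, B ∩ t n := by
    rw [← inter_iUnion]
    simp only [ht, Set.iUnion_accumulate]
    exact (inter_eq_left.mpr hsub).symm
  calc μ B = μ (⋃ n, B ∩ t n) := by rw [← hcov]
    _ = ⨆ n, μ (B ∩ t n) := Directed.measure_iUnion hdir
    _ ≤ muLoc μ B := iSup_le fun n => measure_inter_le_muLoc B (htm n) (htfin n)

/-- A locally measurable function vanishing outside a measurable set contained in a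
σ-finite union is measurable. -/
lemma measurable_of_locMeasurable_indicator {E : Type*} [MeasurableSpace E] [Zero E]
    {G : Ω → E} (hG : Measurable[locSpace μ] G) {A' : Set Ω} (hA' : MeasurableSet A')
    {s : ℕ → Set Ω} (hs : ∀ n, MeasurableSet (s n) ∧ μ (s n) < ∞) (hsub : A' ⊆ ⋃ n, s n)
    (hzero : ∀ x ∉ A', G x = 0) : Measurable G := by
  intro T hT
  have hP : LocallyMeasurable μ (G ⁻¹' T) := hG hT
  have h1 : MeasurableSet (G ⁻¹' T ∩ A') := by
    have : G ⁻¹' T ∩ A' = ⋃ n, G ⁻¹' T ∩ (A' ∩ s n) := by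
      rw [← inter_iUnion, ← inter_iUnion]
      rw [inter_eq_left.mpr hsub]
    rw [this]
    exact MeasurableSet.iUnion fun n =>
      hP (A' ∩ s n) (hA'.inter (hs n).1)
        ((measure_mono inter_subset_right).trans_lt (hs n).2)
  have hdec : G ⁻¹' T = (G ⁻¹' T ∩ A') ∪ (G ⁻¹' T ∩ A'ᶜ) := by
    rw [← inter_union_distrib_left, union_compl_self, inter_univ]
  by_cases h0 : (0 : E) ∈ T
  · have : G ⁻¹' T ∩ A'ᶜ = A'ᶜ := by
      refine inter_eq_right.mpr fun x hx => ?_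
      simp only [mem_preimage, hzero x hx]; exact h0
    rw [hdec, this]
    exact h1.union hA'.compl
  · have : G ⁻¹' T ∩ A'ᶜ = ∅ := by
      refine eq_empty_iff_forall_notMem.mpr fun x hx => ?_
      have := hzero x hx.2
      simp only [mem_inter_iff, mem_preimage, this] at hx
      exact h0 hx.1
    rw [hdec, this, union_empty]
    exact h1

lemma lintegral_loc_eq (ν : @Measure Ω (locSpace μ))
    (hν : ∀ B : Set Ω, LocallyMeasurable μ B → ν B = muLoc μ B)
    {A' : Set Ω} (hA' : MeasurableSet A')
    {s : ℕ → Set Ω} (hs : ∀ n, MeasurableSet (s n) ∧ μ (s n) < ∞) (hsub : A' ⊆ ⋃ n, s n)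
    {G : Ω → ℝ≥0∞} (hG : Measurable G) (hGind : ∀ x ∉ A', G x = 0) :
    ∫⁻ x, G x ∂μ = ∫⁻ x, G x ∂ν := by
  have hle : mΩ ≤ locSpace μ := le_locSpace
  have hagree : ∀ T : Set Ω, MeasurableSet T → T ⊆ A' → ν T = μ T := by
    intro T hT hTsub
    rw [hν T (locMeasurable_of_measurable hT)]
    exact muLoc_eq_of_subset_sigmaFin (locMeasurable_of_measurable hT) hs (hTsub.trans hsub)
  have htrim : (ν.restrict A').trim hle = μ.restrict A' := by
    refine Measure.ext fun T hT => ?_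
    rw [trim_measurableSet_eq hle hT,
      @Measure.restrict_apply _ (locSpace μ) ν A' T (hle _ hT),
      Measure.restrict_apply hT]
    exact hagree _ (hT.inter hA') inter_subset_right
  have hGi : A'.indicator G = G := by
    funext x
    by_cases hx : x ∈ A'
    · rw [indicator_of_mem hx]
    · rw [indicator_of_notMem hx, hGind x hx]
  calc ∫⁻ x, G x ∂μ = ∫⁻ x, A'.indicator G x ∂μ := by rw [hGi]
    _ = ∫⁻ x, G x ∂(μ.restrict A') := lintegral_indicator hA' G
    _ = ∫⁻ x, G x ∂((ν.restrict A').trim hle) := by rw [htrim]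
    _ = ∫⁻ x, G x ∂(ν.restrict A') := lintegral_trim hle hG
    _ = ∫⁻ x, A'.indicator G x ∂ν := (lintegral_indicator (μ := ν) (hle _ hA') G).symm
    _ = ∫⁻ x, G x ∂ν := by rw [hGi]

lemma exists_seq_sup {B : Set Ω} (hfin : muLoc μ B ≠ ∞) :
    ∃ U : ℕ → Set Ω, (∀ k, MeasurableSet (U k) ∧ μ (U k) < ∞) ∧
      muLoc μ B ≤ ⨆ k, μ (B ∩ U k) := by
  by_cases h0 : muLoc μ B = 0
  · exact ⟨fun _ => ∅, fun _ => ⟨MeasurableSet.empty, by simp⟩, by simp [h0]⟩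
  · have hex : ∀ k : ℕ, ∃ U : Set Ω, (MeasurableSet U ∧ μ U < ∞) ∧
        muLoc μ B - ((k : ℝ≥0∞) + 1)⁻¹ < μ (B ∩ U) := by
      intro k
      have hlt : muLoc μ B - ((k : ℝ≥0∞) + 1)⁻¹ < muLoc μ B :=
        ENNReal.sub_lt_self hfin h0 (ENNReal.inv_ne_zero.mpr (by simp))
      rw [muLoc] at hlt
      conv at hlt => rw [lt_iSup_iff]
      obtain ⟨A, hA⟩ := hlt
      rw [lt_iSup_iff] at hA
      obtain ⟨hA1, hA2⟩ := hA
      exact ⟨A, hA1, hA2⟩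
    choose U hU hlt using hex
    refine ⟨U, hU, ?_⟩
    refine ENNReal.le_of_forall_pos_le_add fun ε hε _ => ?_
    obtain ⟨n, hn⟩ := ENNReal.exists_inv_nat_lt (a := (ε : ℝ≥0∞))
      (by exact_mod_cast hε.ne')
    have h1 : muLoc μ B ≤ μ (B ∩ U n) + ((n : ℝ≥0∞) + 1)⁻¹ :=
      tsub_le_iff_right.mp (hlt n).le
    have h2 : ((n : ℝ≥0∞) + 1)⁻¹ ≤ (n : ℝ≥0∞)⁻¹ :=
      ENNReal.inv_le_inv' (le_add_of_nonneg_right zero_le_one)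
    calc muLoc μ B ≤ μ (B ∩ U n) + ((n : ℝ≥0∞) + 1)⁻¹ := h1
      _ ≤ (⨆ k, μ (B ∩ U k)) + ε := add_le_add (le_iSup (fun k => μ (B ∩ U k)) n) (h2.trans hn.le)

end Aux

section Aux2
variable {Ω : Type*} [mΩ : MeasurableSpace Ω] {μ : Measure Ω}

lemma meas_setOf_le_lt_top {α : Type*} {mα : MeasurableSpace α} {μ' : Measure α} {h : α → ℝ≥0∞}
    (hm : AEMeasurable h μ') {c : ℝ≥0∞} (hc : c ≠ 0) (hfin : ∫⁻ x, h x ∂μ' < ∞) :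
    μ' {x | c ≤ h x} < ∞ := by
  have hmk := mul_meas_ge_le_lintegral₀ hm c
  by_contra H
  rw [not_lt, top_le_iff] at H
  rw [H, ENNReal.mul_top hc] at hmk
  exact absurd (hmk.trans_lt hfin) (lt_irrefl ∞)

lemma mem_B_of_ne_zero {g : Ω → ℝ} {q : ℝ} (hq : 0 < q) {x : Ω} (hx : g x ≠ 0) :
    ∃ n : ℕ, ((n : ℝ≥0∞) + 1)⁻¹ ≤ (‖g x‖₊ : ℝ≥0∞) ^ q := by
  have hpos : (0 : ℝ≥0∞) < (‖g x‖₊ : ℝ≥0∞) ^ q := by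
    refine ENNReal.rpow_pos ?_ ENNReal.coe_ne_top
    exact_mod_cast pos_iff_ne_zero.mpr (nnnorm_ne_zero_iff.mpr hx)
  obtain ⟨n, hn⟩ := ENNReal.exists_inv_nat_lt hpos.ne'
  refine ⟨n, le_trans ?_ hn.le⟩
  exact ENNReal.inv_le_inv' (le_add_of_nonneg_right zero_le_one)

lemma measurable_rpow_nnnorm {m : MeasurableSpace Ω} {g : Ω → ℝ} (hg : Measurable[m] g) (q : ℝ) :
    Measurable[m] fun x => (‖g x‖₊ : ℝ≥0∞) ^ q :=
  ENNReal.continuous_rpow_const.measurable.comp hg.enorm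

end Aux2


/-- `L_p(μ)` is naturally identified with `L_p(μ_loc)` (for `1 ≤ p < ∞`): every
`f ∈ L_p(μ)` belongs to `L_p(μ_loc)` with the same norm, and every `f ∈ L_p(μ_loc)`
agrees `μ_loc`-a.e. with a function `1_{A'}·f`, `A' ∈ 𝒜` σ-finite, which lies in
`L_p(μ)`. Here `ν` is the measure on `𝒜_loc` induced by `μ_loc`. -/
theorem lp_muLoc_identification {Ω : Type*} [MeasurableSpace Ω] (μ : Measure Ω)
    (p : ℝ≥0∞) (hp : 1 ≤ p) (hp' : p ≠ ∞)
    (ν : @Measure Ω (locSpace μ)) (hν : ∀ B : Set Ω, LocallyMeasurable μ B → ν B = muLoc μ B) :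
    (∀ f : Ω → ℝ, MemLp f p μ →
      @MemLp Ω ℝ (locSpace μ) _ _ f p ν ∧ @eLpNorm Ω ℝ _ (locSpace μ) f p ν = eLpNorm f p μ) ∧
    (∀ f : Ω → ℝ, @MemLp Ω ℝ (locSpace μ) _ _ f p ν →
      ∃ A' : Set Ω, MeasurableSet A' ∧
        (∃ s : ℕ → Set Ω, (∀ n, MeasurableSet (s n) ∧ μ (s n) < ∞) ∧ A' ⊆ ⋃ n, s n) ∧
        (∀ᵐ x ∂ν, f x = A'.indicator f x) ∧ MemLp (A'.indicator f) p μ) := by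
  have hle : ‹MeasurableSpace Ω› ≤ locSpace μ := le_locSpace
  have hp0 : p ≠ 0 := (lt_of_lt_of_le zero_lt_one hp).ne'
  have hq : 0 < p.toReal := ENNReal.toReal_pos hp0 hp'
  constructor
  · -- Part 1
    intro f hf
    obtain ⟨g, hg, hfg⟩ := hf.1
    have hgm : Measurable g := hg.measurable
    set h : Ω → ℝ≥0∞ := fun x => (‖g x‖₊ : ℝ≥0∞) ^ p.toReal with hh
    have hmeas : Measurable h := measurable_rpow_nnnorm hgm p.toReal
    -- f = g ν-a.e.
    have hNnull : μ (toMeasurable μ {x | ¬ f x = g x}) = 0 := by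
      rw [measure_toMeasurable]; exact ae_iff.mp hfg
    have hνN : ν (toMeasurable μ {x | ¬ f x = g x}) = 0 := by
      rw [hν _ (locMeasurable_of_measurable (measurableSet_toMeasurable μ _))]
      exact le_antisymm (le_of_le_of_eq (muLoc_le_measure _) hNnull) (zero_le)
    have hfgν : f =ᵐ[ν] g :=
      ae_iff.mpr (measure_mono_null (subset_toMeasurable μ _) hνN)
    -- σ-finite support
    have hint : ∫⁻ x, h x ∂μ < ∞ := by
      refine lintegral_rpow_enorm_lt_top_of_eLpNorm_lt_top (f := g) hp0 hp' ?_
      rw [← eLpNorm_congr_ae hfg]; exact hf.2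
    set s : ℕ → Set Ω := fun n => {x | ((n : ℝ≥0∞) + 1)⁻¹ ≤ h x} with hsdef
    have hs : ∀ n, MeasurableSet (s n) ∧ μ (s n) < ∞ := fun n =>
      ⟨hmeas measurableSet_Ici,
        meas_setOf_le_lt_top hmeas.aemeasurable (by simp) hint⟩
    set A' : Set Ω := {x | g x ≠ 0} with hA'def
    have hA' : MeasurableSet A' := by
      have h0 : A' = (g ⁻¹' {0})ᶜ := by ext x; simp [hA'def]
      rw [h0]; exact (hgm (measurableSet_singleton 0)).compl
    have hsub : A' ⊆ ⋃ n, s n := by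
      intro x hx
      obtain ⟨n, hn⟩ := mem_B_of_ne_zero hq hx
      exact mem_iUnion.mpr ⟨n, hn⟩
    have hind : ∀ x ∉ A', h x = 0 := by
      intro x hx
      have : g x = 0 := not_not.mp hx
      simp [hh, this, ENNReal.zero_rpow_of_pos hq]
    have hlint : ∫⁻ x, h x ∂μ = ∫⁻ x, h x ∂ν :=
      lintegral_loc_eq ν hν hA' hs hsub hmeas hind
    have hgg : @eLpNorm Ω ℝ _ (locSpace μ) g p ν = eLpNorm g p μ := by
      rw [eLpNorm_eq_lintegral_rpow_enorm_toReal hp0 hp',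
        eLpNorm_eq_lintegral_rpow_enorm_toReal hp0 hp']
      exact congrArg (· ^ (1 / p.toReal)) hlint.symm
    have heq : @eLpNorm Ω ℝ _ (locSpace μ) f p ν = eLpNorm f p μ := by
      rw [eLpNorm_congr_ae hfgν, eLpNorm_congr_ae hfg, hgg]
    exact ⟨⟨⟨g, hg.mono hle, hfgν⟩, by rw [heq]; exact hf.2⟩, heq⟩
  · -- Part 2
    intro f hf
    obtain ⟨g, hg, hfg⟩ := hf.1
    have hgm : Measurable[locSpace μ] g := hg.measurable
    set h : Ω → ℝ≥0∞ := fun x => (‖g x‖₊ : ℝ≥0∞) ^ p.toReal with hh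
    have hmeas : Measurable[locSpace μ] h := measurable_rpow_nnnorm hgm p.toReal
    have hint : ∫⁻ x, h x ∂ν < ∞ := by
      refine lintegral_rpow_enorm_lt_top_of_eLpNorm_lt_top (f := g) hp0 hp' ?_
      rw [← eLpNorm_congr_ae hfg]; exact hf.2
    set B : ℕ → Set Ω := fun n => {x | ((n : ℝ≥0∞) + 1)⁻¹ ≤ h x} with hBdef
    have hBloc : ∀ n, LocallyMeasurable μ (B n) := fun n => hmeas measurableSet_Ici
    have hBfin : ∀ n, ν (B n) < ∞ := fun n =>
      meas_setOf_le_lt_top hmeas.aemeasurable (by simp) hint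
    have hmuLocBfin : ∀ n, muLoc μ (B n) ≠ ∞ := fun n => by
      rw [← hν _ (hBloc n)]; exact (hBfin n).ne
    choose U hU hsup using fun n => exists_seq_sup (hmuLocBfin n)
    set W : ℕ → Set Ω := fun n => ⋃ k, U n k with hWdef
    have hWm : ∀ n, MeasurableSet (W n) := fun n =>
      MeasurableSet.iUnion fun k => (hU n k).1
    have hBWloc : ∀ n, LocallyMeasurable μ (B n ∩ W n) := by
      intro n C hC hCf
      have hre : B n ∩ W n ∩ C = B n ∩ C ∩ W n := by
        ext x; simp only [mem_inter_iff]; tauto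
      rw [hre]
      exact (hBloc n C hC hCf).inter (hWm n)
    have hBWm : ∀ n, MeasurableSet (B n ∩ W n) := fun n =>
      measurableSet_of_subset_sigmaFin (hBWloc n) (hU n) inter_subset_right
    set A' : Set Ω := ⋃ n, B n ∩ W n with hA'def
    have hA' : MeasurableSet A' := MeasurableSet.iUnion hBWm
    set s' : ℕ → Set Ω := fun m => U m.unpair.1 m.unpair.2 with hs'def
    have hs' : ∀ m, MeasurableSet (s' m) ∧ μ (s' m) < ∞ := fun m => hU _ _
    have hsub' : A' ⊆ ⋃ m, s' m := by
      rw [hs'def, Set.iUnion_unpair fun i j => U i j]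
      exact iUnion_subset fun n =>
        inter_subset_right.trans (subset_iUnion_of_subset n (le_refl (W n)))
    -- the bad sets are null
    have hnull : ∀ n, ν (B n \ W n) = 0 := by
      intro n
      have hWloc : MeasurableSet[locSpace μ] (W n) := hle _ (hWm n)
      have hadd : ν (B n) = ν (B n ∩ W n) + ν (B n \ W n) :=
        (measure_inter_add_diff _ hWloc).symm
      have hge : ν (B n) ≤ ν (B n ∩ W n) := by
        rw [hν _ (hBWloc n),
          muLoc_eq_of_subset_sigmaFin (hBWloc n) (hU n) inter_subset_right,
          hν _ (hBloc n)]
        refine (hsup n).trans (iSup_le fun k => measure_mono ?_)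
        exact inter_subset_inter_right _ (subset_iUnion _ k)
      have hIfin : ν (B n ∩ W n) ≠ ∞ :=
        ((measure_mono inter_subset_left).trans_lt (hBfin n)).ne
      have hsum : ν (B n ∩ W n) + ν (B n \ W n) ≤ ν (B n ∩ W n) + 0 := by
        rw [add_zero, ← hadd]
        exact hge
      have hz := (ENNReal.add_le_add_iff_left hIfin).mp hsum
      exact le_antisymm hz (zero_le)
    have hbad : ν (⋃ n, B n \ W n) = 0 := measure_iUnion_null hnull
    -- a.e. equality
    have haeq : ∀ᵐ x ∂ν, f x = A'.indicator f x := by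
      have hae2 : ∀ᵐ x ∂ν, x ∉ ⋃ n, B n \ W n := measure_eq_zero_iff_ae_notMem.mp hbad
      filter_upwards [hfg, hae2] with x hx1 hx2
      by_cases hxA : x ∈ A'
      · rw [indicator_of_mem hxA]
      · rw [indicator_of_notMem hxA]
        by_contra hne
        have hgx : g x ≠ 0 := fun hgx0 => hne (hx1.trans hgx0)
        obtain ⟨n, hn⟩ := mem_B_of_ne_zero hq hgx
        have hxB : x ∈ B n := hn
        by_cases hxW : x ∈ W n
        · exact hxA (mem_iUnion.mpr ⟨n, hxB, hxW⟩)
        · exact hx2 (mem_iUnion.mpr ⟨n, hxB, hxW⟩)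
    -- measurability of the indicator
    have hGloc : Measurable[locSpace μ] (A'.indicator g) :=
      Measurable.indicator hgm (hle _ hA')
    have hGmeas : Measurable (A'.indicator g) :=
      measurable_of_locMeasurable_indicator hGloc hA' hs' hsub'
        (fun x hx => indicator_of_notMem hx g)
    -- μ-a.e. equality of the two indicators
    set N : Set Ω := @toMeasurable Ω (locSpace μ) ν {x | ¬ f x = g x} with hNdef
    have hνE : ν N = 0 := by
      rw [hNdef, @measure_toMeasurable Ω (locSpace μ) ν _]
      exact ae_iff.mp hfg
    have hNloc : MeasurableSet[locSpace μ] N :=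
      @measurableSet_toMeasurable Ω (locSpace μ) ν _
    have hNsub : {x | ¬ f x = g x} ⊆ N := @subset_toMeasurable Ω (locSpace μ) ν _
    have hind_ae : ∀ᵐ x ∂μ, A'.indicator f x = A'.indicator g x := by
      rw [ae_iff]
      refine measure_mono_null (t := ⋃ m, N ∩ s' m) ?_ ?_
      · intro x hx
        simp only [mem_setOf_eq] at hx
        have hxA : x ∈ A' := by
          by_contra hxA
          rw [indicator_of_notMem hxA, indicator_of_notMem hxA] at hx
          exact hx rfl
        have hxfg : x ∈ N := by
          apply hNsub
          rw [indicator_of_mem hxA, indicator_of_mem hxA] at hx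
          exact hx
        obtain ⟨m, hm⟩ := mem_iUnion.mp (hsub' hxA)
        exact mem_iUnion.mpr ⟨m, hxfg, hm⟩
      · refine measure_iUnion_null fun m => ?_
        refine le_antisymm ?_ (zero_le)
        calc μ (N ∩ s' m)
            ≤ muLoc μ N :=
              measure_inter_le_muLoc _ (hs' m).1 (hs' m).2
          _ = 0 := by rw [← hν _ hNloc, hνE]
    have haesm : AEStronglyMeasurable (A'.indicator f) μ :=
      ⟨A'.indicator g, hGmeas.stronglyMeasurable, hind_ae⟩
    -- finiteness of the norm
    set G : Ω → ℝ≥0∞ := fun x => (‖A'.indicator g x‖₊ : ℝ≥0∞) ^ p.toReal with hGdef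
    have hGm2 : Measurable G := measurable_rpow_nnnorm hGmeas p.toReal
    have hGzero : ∀ x ∉ A', G x = 0 := by
      intro x hx
      simp [hGdef, indicator_of_notMem hx, ENNReal.zero_rpow_of_pos hq]
    have hGle : ∀ x, G x ≤ h x := by
      intro x
      by_cases hx : x ∈ A'
      · simp [hGdef, hh, indicator_of_mem hx]
      · rw [hGzero x hx]; exact zero_le
    have hGint : ∫⁻ x, G x ∂μ < ∞ := by
      rw [lintegral_loc_eq ν hν hA' hs' hsub' hGm2 hGzero]
      exact (lintegral_mono hGle).trans_lt hint
    have hsnorm : eLpNorm (A'.indicator f) p μ < ∞ := by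
      rw [eLpNorm_congr_ae hind_ae, eLpNorm_eq_lintegral_rpow_enorm_toReal hp0 hp']
      exact ENNReal.rpow_lt_top_of_nonneg (by positivity) hGint.ne
    exact ⟨A', hA', ⟨s', hs', hsub'⟩, haeq, ⟨haesm, hsnorm⟩⟩
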